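/- The inverse semigroup generated by a forward link, and likewise the inverse semigroup generated by a backward link, is isomorphic to the bicyclic monoid. -/

import Mathlib

/-- The bicyclic monoid `Mon⟨b, c | bc = 1⟩`, modelled as `ℕ × ℕ` where `(m, n)`
stands for `cᵐbⁿ`. -/
def Bicyclic : Type := ℕ × ℕ

/-- Multiplication of the bicyclic monoid: `cᵐbⁿ · cᵖbᑫ = c^(m + (p ∸ n)) b^(q + (n ∸ p))`. -/
def bmul (x y : ℕ × ℕ) : ℕ × ℕ := (x.1 + (y.1 - x.2), y.2 + (x.2 - y.1))

instance : Monoid Bicyclic where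
  mul x y := bmul x y
  one := ((0, 0) : ℕ × ℕ)
  mul_assoc x y z := by
    show bmul (bmul x y) z = bmul x (bmul y z)
    simp only [bmul, Prod.mk.injEq]
    omega
  one_mul x := by
    obtain ⟨a, b⟩ := x
    show bmul (0, 0) (a, b) = (a, b)
    simp only [bmul, Prod.mk.injEq]
    omega
  mul_one x := by
    obtain ⟨a, b⟩ := x
    show bmul (a, b) (0, 0) = (a, b)
    simp only [bmul, Prod.mk.injEq]
    omega

/-- The symmetric inverse semigroup: partial bijections of `X` under composition. -/
instance PEquiv.instSemigroup {X : Type} : Semigroup (PEquiv X X) where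
  mul f g := f.trans g
  mul_assoc f g h := by
    apply PEquiv.ext
    intro x
    show ((f.trans g).trans h) x = (f.trans (g.trans h)) x
    simp [PEquiv.trans]
    cases f x <;> simp

/-- The inverse subsemigroup `[u]` of the symmetric inverse semigroup generated by a
partial bijection `u`: the smallest subsemigroup containing `u` and closed under
taking inverse partial bijections. -/
def invClosure {X : Type} (u : PEquiv X X) : Subsemigroup (PEquiv X X) :=
  sInf {T : Subsemigroup (PEquiv X X) | u ∈ T ∧ ∀ f ∈ T, f.symm ∈ T}

/-- A forward link: the partial injection `aᵢ ↦ aᵢ₊₁` on a countably infinite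
sequence of distinct elements `a₀, a₁, a₂, …`, undefined elsewhere. -/
def IsForwardLink {X : Type} (f : PEquiv X X) : Prop :=
  ∃ a : ℕ → X, Function.Injective a ∧ (∀ i : ℕ, f (a i) = some (a (i + 1))) ∧
    (∀ x : X, (∀ i : ℕ, x ≠ a i) → f x = none)

/-- Two partial bijections `λ : A → B` and `μ : C → D` are strongly disjoint if
`A ∩ C = A ∩ D = B ∩ C = B ∩ D = ∅`, i.e. `(A ∪ B) ∩ (C ∪ D) = ∅`. -/
def StronglyDisjoint {X : Type} (f g : PEquiv X X) : Prop :=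
  ∀ x : X, (f x ≠ none ∨ f.symm x ≠ none) → (g x = none ∧ g.symm x = none)

section Aux

variable {X : Type}

open Classical in
/-- Partial index function of a sequence. -/
noncomputable def idxFn (a : ℕ → X) (x : X) : Option ℕ :=
  if h : ∃ i, a i = x then some h.choose else none

lemma idxFn_eq_some {a : ℕ → X} (ha : Function.Injective a) (i : ℕ) :
    idxFn a (a i) = some i := by
  have h : ∃ j, a j = a i := ⟨i, rfl⟩
  rw [idxFn, dif_pos h]
  exact congrArg some (ha h.choose_spec)

lemma idxFn_eq_none {a : ℕ → X} {x : X} (hx : ¬ ∃ i, a i = x) :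
    idxFn a x = none := by rw [idxFn, dif_neg hx]

lemma idxFn_spec {a : ℕ → X} {x : X} {i : ℕ} (h : idxFn a x = some i) : a i = x := by
  by_cases hex : ∃ j, a j = x
  · rw [idxFn, dif_pos hex] at h
    obtain rfl : hex.choose = i := Option.some.inj h
    exact hex.choose_spec
  · rw [idxFn, dif_neg hex] at h; exact absurd h (by simp)

/-- The partial bijection `aᵢ ↦ a_{i-m+n}` defined for `i ≥ m`. -/
noncomputable def linkE (a : ℕ → X) (ha : Function.Injective a) (m n : ℕ) : PEquiv X X where
  toFun x := (idxFn a x).bind (fun i => if m ≤ i then some (a (i - m + n)) else none)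
  invFun x := (idxFn a x).bind (fun i => if n ≤ i then some (a (i - n + m)) else none)
  inv x y := by
    simp only [Option.mem_def, Option.bind_eq_some_iff]
    constructor
    · rintro ⟨j, hj, hx⟩
      have hay : a j = y := idxFn_spec hj
      by_cases hn : n ≤ j
      · rw [if_pos hn] at hx
        obtain rfl : a (j - n + m) = x := Option.some.inj hx
        refine ⟨j - n + m, idxFn_eq_some ha _, ?_⟩
        rw [if_pos (by omega)]
        have : j - n + m - m + n = j := by omega
        rw [this, hay]
      · rw [if_neg hn] at hx; exact absurd hx (by simp)
    · rintro ⟨j, hj, hy⟩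
      have hax : a j = x := idxFn_spec hj
      by_cases hm : m ≤ j
      · rw [if_pos hm] at hy
        obtain rfl : a (j - m + n) = y := Option.some.inj hy
        refine ⟨j - m + n, idxFn_eq_some ha _, ?_⟩
        rw [if_pos (by omega)]
        have : j - m + n - n + m = j := by omega
        rw [this, hax]
      · rw [if_neg hm] at hy; exact absurd hy (by simp)

lemma linkE_apply (a : ℕ → X) (ha : Function.Injective a) (m n i : ℕ) :
    linkE a ha m n (a i) = if m ≤ i then some (a (i - m + n)) else none := by
  show ((idxFn a (a i)).bind _) = _
  rw [idxFn_eq_some ha, Option.bind_some]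

lemma linkE_symm (a : ℕ → X) (ha : Function.Injective a) (m n : ℕ) :
    (linkE a ha m n).symm = linkE a ha n m := rfl

lemma linkE_mul (a : ℕ → X) (ha : Function.Injective a) (m n p q : ℕ) :
    linkE a ha m n * linkE a ha p q
      = linkE a ha (m + (p - n)) (q + (n - p)) := by
  apply PEquiv.ext
  intro x
  show ((linkE a ha m n).trans (linkE a ha p q)) x = _
  show ((linkE a ha m n) x).bind (linkE a ha p q) = ((idxFn a x).bind _)
  show (((idxFn a x).bind _).bind (linkE a ha p q)) = ((idxFn a x).bind _)
  cases hix : idxFn a x with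
  | none => simp
  | some i =>
    simp only [Option.bind_some]
    by_cases hm : m ≤ i
    · rw [if_pos hm, Option.bind_some, linkE_apply a ha p q]
      by_cases hp : p ≤ i - m + n
      · rw [if_pos hp, if_pos (by omega)]
        congr 1
        exact congrArg a (by omega)
      · rw [if_neg hp, if_neg (by omega)]
    · rw [if_neg hm, Option.bind_none, if_neg (by omega)]

lemma linkE_injective (a : ℕ → X) (ha : Function.Injective a) {m n m' n' : ℕ}
    (h : linkE a ha m n = linkE a ha m' n') : m = m' ∧ n = n' := by
  have hmm' : m = m' := by
    by_contra hne
    rcases Nat.lt_or_ge m m' with hlt | hge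
    · have h1 := linkE_apply a ha m n m
      have h2 := linkE_apply a ha m' n' m
      rw [h, h2, if_neg (by omega)] at h1
      rw [if_pos (le_refl m)] at h1
      exact absurd h1 (by simp)
    · have hlt : m' < m := by omega
      have h1 := linkE_apply a ha m n m'
      have h2 := linkE_apply a ha m' n' m'
      rw [h, h2, if_pos (le_refl m')] at h1
      rw [if_neg (by omega)] at h1
      exact absurd h1.symm (by simp)
  subst hmm'
  refine ⟨rfl, ?_⟩
  have h1 := linkE_apply a ha m n m
  have h2 := linkE_apply a ha m n' m
  rw [h, h2, if_pos (le_refl m)] at h1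
  rw [if_pos (le_refl m)] at h1
  have h3 := ha (Option.some.inj h1)
  omega

lemma mem_invClosure_self (u : PEquiv X X) : u ∈ invClosure u :=
  Subsemigroup.mem_sInf.2 fun _ hT => hT.1

lemma symm_mem_invClosure {u g : PEquiv X X} (hg : g ∈ invClosure u) :
    g.symm ∈ invClosure u :=
  Subsemigroup.mem_sInf.2 fun T hT => hT.2 g (Subsemigroup.mem_sInf.1 hg T hT)

lemma invClosure_symm (u : PEquiv X X) : invClosure u.symm = invClosure u := by
  apply le_antisymm
  · exact sInf_le ⟨symm_mem_invClosure (mem_invClosure_self u),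
      fun g hg => symm_mem_invClosure hg⟩
  · refine sInf_le ⟨?_, fun g hg => symm_mem_invClosure hg⟩
    have := symm_mem_invClosure (mem_invClosure_self u.symm)
    rwa [PEquiv.symm_symm] at this

lemma invClosure_forwardLink_mulEquiv {f : PEquiv X X} (hf : IsForwardLink f) :
    Nonempty (↥(invClosure f) ≃* Bicyclic) := by
  obtain ⟨a, ha, hmap, hnone⟩ := hf
  have hE1 : linkE a ha 0 1 = f := by
    apply PEquiv.ext
    intro x
    by_cases hx : ∃ i, a i = x
    · obtain ⟨i, rfl⟩ := hx
      rw [linkE_apply a ha 0 1 i, if_pos (Nat.zero_le i), hmap i]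
      congr 2
    · show ((idxFn a x).bind _) = f x
      rw [idxFn_eq_none hx, hnone x (fun i hxi => hx ⟨i, hxi.symm⟩)]
      rfl
  have hf0 : linkE a ha 0 1 ∈ invClosure f := by
    rw [hE1]; exact mem_invClosure_self f
  -- every linkE is in the closure
  have hpow : ∀ k : ℕ, linkE a ha 0 (k + 1) ∈ invClosure f ∧
      linkE a ha (k + 1) 0 ∈ invClosure f := by
    intro k
    induction k with
    | zero =>
      exact ⟨hf0, by rw [← linkE_symm]; exact symm_mem_invClosure hf0⟩
    | succ k ih =>
      have h1 : linkE a ha 0 (k + 2) ∈ invClosure f := by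
        have := mul_mem hf0 ih.1
        rwa [linkE_mul] at this
      exact ⟨h1, by rw [← linkE_symm]; exact symm_mem_invClosure h1⟩
  have hmem : ∀ m n : ℕ, linkE a ha m n ∈ invClosure f := by
    intro m n
    have h1 := mul_mem (mul_mem (mul_mem (hpow 0).1 (hpow m).2) (hpow n).1) (hpow 0).2
    rw [linkE_mul, linkE_mul, linkE_mul] at h1
    have e1 : 0 + (m + 1 - 1) = m := by omega
    have e2 : 0 + (1 - (m + 1)) = 0 := by omega
    rw [e1, e2] at h1
    have e3 : m + (0 - 0) = m := by omega
    have e4 : (n + 1) + (0 - 0) = n + 1 := by omega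
    rw [e3, e4] at h1
    have e5 : m + (1 - (n + 1)) = m := by omega
    have e6 : 0 + (n + 1 - 1) = n := by omega
    rwa [e5, e6] at h1
  -- the closure consists exactly of the linkE's
  let T : Subsemigroup (PEquiv X X) :=
    { carrier := Set.range (fun p : ℕ × ℕ => linkE a ha p.1 p.2)
      mul_mem' := by
        rintro _ _ ⟨p, rfl⟩ ⟨q, rfl⟩
        exact ⟨(p.1 + (q.1 - p.2), q.2 + (p.2 - q.1)), (linkE_mul a ha _ _ _ _).symm⟩ }
  have hle : invClosure f ≤ T := by
    refine sInf_le ⟨⟨(0, 1), hE1⟩, ?_⟩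
    rintro g ⟨p, rfl⟩
    exact ⟨(p.2, p.1), (linkE_symm a ha p.1 p.2).symm⟩
  -- build the isomorphism
  let φ : Bicyclic → ↥(invClosure f) := fun p : ℕ × ℕ => ⟨linkE a ha p.1 p.2, hmem p.1 p.2⟩
  have hinj : Function.Injective φ := by
    rintro ⟨m, n⟩ ⟨m', n'⟩ hpq
    have := linkE_injective a ha (Subtype.ext_iff.1 hpq)
    exact Prod.ext this.1 this.2
  have hsurj : Function.Surjective φ := by
    rintro ⟨g, hg⟩
    obtain ⟨p, hp⟩ := hle hg
    exact ⟨p, Subtype.ext hp⟩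
  refine ⟨MulEquiv.symm (MulEquiv.mk (Equiv.ofBijective φ ⟨hinj, hsurj⟩) ?_)⟩
  rintro ⟨m, n⟩ ⟨p, q⟩
  apply Subtype.ext
  show linkE a ha (m + (p - n)) (q + (n - p)) = linkE a ha m n * linkE a ha p q
  exact (linkE_mul a ha m n p q).symm

end Aux

/-- The inverse semigroup generated by a forward link, and likewise the inverse
semigroup generated by a backward link (the inverse of a forward link), is
isomorphic to the bicyclic monoid. -/
theorem invClosure_link_mulEquiv_bicyclic {X : Type} (f : PEquiv X X)
    (h : IsForwardLink f ∨ ∃ g : PEquiv X X, IsForwardLink g ∧ f = g.symm) :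
    Nonempty (↥(invClosure f) ≃* Bicyclic) := by
  rcases h with hf | ⟨g, hg, rfl⟩
  · exact invClosure_forwardLink_mulEquiv hf
  · rw [invClosure_symm]
    exact invClosure_forwardLink_mulEquiv hg
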